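/- Let γ : [0,1] → X be a curve parametrized proportionally to arc length with image Γ, a compact connected set with H¹(Γ) < ∞, in a geodesic metric space. Then γ can be chosen Lipschitz with Lipschitz constant at most 32 H¹(Γ). -/

import Mathlib

open MeasureTheory Set Filter Topology

section Aux
variable {X : Type*} [MetricSpace X]

lemma chain_of_connected {Γ : Set X} (h : IsPreconnected Γ) {x y : X} (hx : x ∈ Γ) (hy : y ∈ Γ)
    {ε : ℝ} (hε : 0 < ε) :
    ∃ n, ∃ c : ℕ → X, c 0 = x ∧ c n = y ∧ (∀ i ≤ n, c i ∈ Γ) ∧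
      ∀ i < n, dist (c i) (c (i+1)) ≤ ε := by
  set E : Set X := {z | z ∈ Γ ∧ ∃ n, ∃ c : ℕ → X, c 0 = x ∧ c n = z ∧ (∀ i ≤ n, c i ∈ Γ) ∧
      ∀ i < n, dist (c i) (c (i+1)) ≤ ε} with hE
  have hxE : x ∈ E := ⟨hx, 0, fun _ => x, rfl, rfl, fun i _ => hx, fun i h => by omega⟩
  -- extension step
  have hext : ∀ z ∈ E, ∀ w ∈ Γ, dist z w ≤ ε → w ∈ E := by
    rintro z ⟨hzΓ, n, c, hc0, hcn, hcm, hcd⟩ w hw hd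
    refine ⟨hw, n+1, fun i => if i ≤ n then c i else w, by simp [hc0], by simp, ?_, ?_⟩
    · intro i hi
      by_cases h' : i ≤ n
      · simpa [h'] using hcm i h'
      · simpa [h'] using hw
    · intro i hi
      rcases Nat.lt_or_ge i n with h' | h'
      · have h1 : i ≤ n := h'.le
        have h2 : i + 1 ≤ n := h'
        simpa [h1, h2] using hcd i h'
      · have : i = n := by omega
        subst this
        simp [hcn, hd]
  by_contra hne
  have hyE : y ∉ E := fun ⟨_, hch⟩ => hne hch
  set U : Set X := ⋃ p ∈ E, Metric.ball p ε with hU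
  set V : Set X := ⋃ p ∈ Γ \ E, Metric.ball p ε with hV
  have hcover : Γ ⊆ U ∪ V := by
    intro z hz
    by_cases hzE : z ∈ E
    · exact Or.inl (mem_biUnion hzE (Metric.mem_ball_self hε))
    · exact Or.inr (mem_biUnion ⟨hz, hzE⟩ (Metric.mem_ball_self hε))
  have := h U V (isOpen_biUnion fun _ _ => Metric.isOpen_ball)
      (isOpen_biUnion fun _ _ => Metric.isOpen_ball) hcover
      ⟨x, hx, mem_biUnion hxE (Metric.mem_ball_self hε)⟩
      ⟨y, hy, mem_biUnion ⟨hy, hyE⟩ (Metric.mem_ball_self hε)⟩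
  rcases this with ⟨z, hzΓ, hzU, hzV⟩
  rcases mem_iUnion₂.1 hzU with ⟨p, hpE, hzp⟩
  rcases mem_iUnion₂.1 hzV with ⟨q, hqE, hzq⟩
  have hzE : z ∈ E := hext p hpE z hzΓ (by have := Metric.mem_ball.1 hzp; rw [dist_comm]; exact this.le)
  have : q ∈ E := hext z hzE q hqE.1 (by have := Metric.mem_ball.1 hzq; exact this.le)
  exact hqE.2 this

lemma measure_ball_lb [MeasurableSpace X] [BorelSpace X] {Γ : Set X}
    (hconn : IsPreconnected Γ) {x : X} (hx : x ∈ Γ) {r : ℝ} (hr : 0 < r)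
    (hfar : ∃ y ∈ Γ, r < dist x y) :
    ENNReal.ofReal r ≤ μH[1] (Γ ∩ Metric.closedBall x r) := by
  obtain ⟨y, hy, hxy⟩ := hfar
  set f : X → ℝ := fun z => dist z x with hf
  have hlip : LipschitzWith 1 f := LipschitzWith.dist_left x
  have himg : IsPreconnected (f '' Γ) := hconn.image f hlip.continuous.continuousOn
  have h0 : (0:ℝ) ∈ f '' Γ := ⟨x, hx, by simp [hf]⟩
  have hyy : dist y x ∈ f '' Γ := ⟨y, hy, rfl⟩
  have hIcc : Icc (0:ℝ) (dist y x) ⊆ f '' Γ := himg.Icc_subset h0 hyy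
  have hIcc' : Icc (0:ℝ) r ⊆ f '' (Γ ∩ Metric.closedBall x r) := by
    intro v hv
    have : v ∈ f '' Γ := hIcc ⟨hv.1, hv.2.trans (by rw [dist_comm]; exact hxy.le)⟩
    obtain ⟨z, hz, hzv⟩ := this
    exact ⟨z, ⟨hz, by have h := hv.2; rw [← hzv] at h; exact h⟩, hzv⟩
  calc ENNReal.ofReal r = μH[1] (Icc (0:ℝ) r) := by
        rw [MeasureTheory.hausdorffMeasure_real, Real.volume_Icc]; simp
    _ ≤ μH[1] (f '' (Γ ∩ Metric.closedBall x r)) := measure_mono hIcc'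
    _ ≤ 1 * μH[1] (Γ ∩ Metric.closedBall x r) := by
        have := hlip.hausdorffMeasure_image_le (d := 1) zero_le_one (Γ ∩ Metric.closedBall x r)
        simpa using this
    _ = _ := one_mul _

lemma card_separated [MeasurableSpace X] [BorelSpace X] {Γ : Set X} (hΓc : IsClosed Γ)
    (hconn : IsPreconnected Γ) {a b : X} (ha : a ∈ Γ) (hb : b ∈ Γ) {ε : ℝ} (hε : 0 < ε)
    (hD : ε < dist a b) (S : Finset X) (hS : ∀ s ∈ S, s ∈ Γ)
    (hsep : ∀ s ∈ S, ∀ t ∈ S, s ≠ t → ε < dist s t) :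
    (S.card : ENNReal) * ENNReal.ofReal (ε/2) ≤ μH[1] Γ := by
  classical
  set B : X → Set X := fun s => Γ ∩ Metric.closedBall s (ε/2) with hB
  have hmeas : ∀ s ∈ S, MeasurableSet (B s) :=
    fun s _ => (hΓc.inter Metric.isClosed_closedBall).measurableSet
  have hdisj : (S : Set X).PairwiseDisjoint B := by
    intro s hsm t htm hst
    refine Set.disjoint_left.2 fun z hzs hzt => ?_
    have : dist s t ≤ ε := by
      calc dist s t ≤ dist s z + dist z t := dist_triangle _ _ _
        _ ≤ ε/2 + ε/2 := add_le_add (by rw [dist_comm]; exact hzs.2) hzt.2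
        _ = ε := by ring
    exact absurd this (not_le.2 (hsep s hsm t htm hst))
  have hlb : ∀ s ∈ S, ENNReal.ofReal (ε/2) ≤ μH[1] (B s) := by
    intro s hsm
    apply measure_ball_lb hconn (hS s hsm) (by linarith)
    rcases le_or_gt (dist a b / 2) (dist s a) with h | h
    · exact ⟨a, ha, by linarith⟩
    · refine ⟨b, hb, ?_⟩
      have := dist_triangle a s b
      rw [dist_comm a s] at this
      linarith
  calc (S.card : ENNReal) * ENNReal.ofReal (ε/2)
      = ∑ s ∈ S, ENNReal.ofReal (ε/2) := by simp [mul_comm]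
    _ ≤ ∑ s ∈ S, μH[1] (B s) := Finset.sum_le_sum hlb
    _ = μH[1] (⋃ s ∈ S, B s) := (measure_biUnion_finset hdisj hmeas).symm
    _ ≤ μH[1] Γ := measure_mono (by
        intro z hz
        simp only [mem_iUnion] at hz
        obtain ⟨i, _, hzi, _⟩ := hz
        exact hzi)

lemma walk_lemma (S : Finset X) (hne : S.Nonempty) (δ : ℝ)
    (hconn : ∀ x ∈ S, ∀ y ∈ S, ∃ n, ∃ c : ℕ → X, c 0 = x ∧ c n = y ∧ (∀ i ≤ n, c i ∈ S) ∧
      ∀ i < n, dist (c i) (c (i+1)) ≤ δ) :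
    ∃ m, ∃ w : ℕ → X, m + 2 ≤ 2 * S.card ∧ (∀ i ≤ m, w i ∈ S) ∧
      (∀ s ∈ S, ∃ i ≤ m, w i = s) ∧ ∀ i < m, dist (w i) (w (i+1)) ≤ δ := by
  classical
  obtain ⟨u, hu⟩ := hne
  have P : ∀ k : ℕ, ∃ (V : Finset X) (m : ℕ) (w : ℕ → X), V ⊆ S ∧ u ∈ V ∧
      min (k+1) S.card ≤ V.card ∧ m + 2 ≤ 2 * V.card ∧ (∀ i ≤ m, w i ∈ V) ∧
      (∀ s ∈ V, ∃ i ≤ m, w i = s) ∧ (∀ i < m, dist (w i) (w (i+1)) ≤ δ) := by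
    intro k
    induction k with
    | zero =>
      have hS1 : 1 ≤ S.card := Finset.card_pos.2 ⟨u, hu⟩
      refine ⟨{u}, 0, fun _ => u, by simpa using hu, Finset.mem_singleton_self u,
        by rw [Finset.card_singleton]; omega, by simp, fun i _ => by simp, ?_,
        fun i hi => by omega⟩
      intro s hs; exact ⟨0, le_refl _, (Finset.mem_singleton.1 hs).symm⟩
    | succ k ih =>
      obtain ⟨V, m, w, hVS, huV, hcard, hm, hwV, hvis, hstep⟩ := ih
      by_cases hVeq : V = S
      · exact ⟨V, m, w, hVS, huV, by subst hVeq; omega, hm, hwV, hvis, hstep⟩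
      · have : ∃ s ∈ S, s ∉ V := by
          by_contra hcon
          push_neg at hcon
          exact hVeq (Finset.Subset.antisymm hVS hcon)
        obtain ⟨s, hsS, hsV⟩ := this
        obtain ⟨n, c, hc0, hcn, hcS, hcd⟩ := hconn u (hVS huV) s hsS
        have hex : ∃ j, c j ∉ V := ⟨n, by rw [hcn]; exact hsV⟩
        set j := Nat.find hex with hj
        have hjV : c j ∉ V := Nat.find_spec hex
        have hj0 : j ≠ 0 := fun h => hjV (by rw [h, hc0]; exact huV)
        have hjn : j ≤ n := Nat.find_min' hex (by rw [hcn]; exact hsV)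
        have hn0 : 1 ≤ n := by
          rcases Nat.eq_zero_or_pos n with h | h
          · exact absurd (by rw [← hcn, ← hc0, h]) (fun hh : u = s => hsV (hh ▸ huV))
          · exact h
        have hprev : c (j-1) ∈ V := by
          by_contra h
          exact absurd (Nat.find_min' hex h) (by omega)
        have hstepj : dist (c (j-1)) (c j) ≤ δ := by
          have : j - 1 < n := by omega
          have h2 := hcd (j-1) this
          rwa [show j - 1 + 1 = j by omega] at h2
        -- splice point
        obtain ⟨i₀, hi₀m, hwi₀⟩ := hvis (c (j-1)) hprev
        set s' := c j with hs'
        have hs'S : s' ∈ S := hcS j hjn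
        set w' : ℕ → X := fun i => if i ≤ i₀ then w i else if i = i₀ + 1 then s' else w (i-2)
          with hw'
        set V' := insert s' V with hV'
        have hcard' : V'.card = V.card + 1 := Finset.card_insert_of_notMem hjV
        refine ⟨V', m + 2, w', Finset.insert_subset hs'S hVS, Finset.mem_insert_of_mem huV,
          ?_, ?_, ?_, ?_, ?_⟩
        · have : V.card ≤ S.card := Finset.card_le_card hVS
          omega
        · omega
        · intro i hi
          by_cases h1 : i ≤ i₀
          · have : w' i = w i := by simp [hw', h1]
            rw [this]
            exact Finset.mem_insert_of_mem (hwV i (h1.trans hi₀m))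
          · by_cases h2 : i = i₀ + 1
            · have : w' i = s' := by simp [hw', h1, h2]
              rw [this]
              exact Finset.mem_insert_self _ _
            · have : w' i = w (i-2) := by simp [hw', h1, h2]
              rw [this]
              exact Finset.mem_insert_of_mem (hwV (i-2) (by omega))
        · intro t ht
          rcases Finset.mem_insert.1 ht with h | h
          · exact ⟨i₀ + 1, by omega, by simp [hw', h]⟩
          · obtain ⟨i, him, hwi⟩ := hvis t h
            by_cases h1 : i ≤ i₀
            · exact ⟨i, by omega, by simp [hw', h1, hwi]⟩
            · refine ⟨i + 2, by omega, ?_⟩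
              have e1 : ¬ (i + 2 ≤ i₀) := by omega
              have e2 : ¬ (i + 2 = i₀ + 1) := by omega
              simp [hw', e1, e2, hwi]
        · intro i hi
          rcases Nat.lt_or_ge i i₀ with h1 | h1
          · have e1 : i ≤ i₀ := by omega
            have e2 : i + 1 ≤ i₀ := by omega
            have v1 : w' i = w i := by simp [hw', e1]
            have v2 : w' (i+1) = w (i+1) := by simp [hw', e2]
            rw [v1, v2]
            exact hstep i (by omega)
          · rcases Nat.eq_or_lt_of_le h1 with h2 | h2
            · -- i = i₀ : step w i₀ → s'
              have e1 : i ≤ i₀ := by omega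
              have e2 : ¬ (i + 1 ≤ i₀) := by omega
              have e3 : i + 1 = i₀ + 1 := by omega
              have v1 : w' i = w i := by simp [hw', e1]
              have v2 : w' (i+1) = s' := by simp [hw', e2, e3]
              rw [v1, v2, ← h2] at *
              rw [hwi₀]
              exact hstepj
            · rcases Nat.eq_or_lt_of_le h2 with h3 | h3
              · -- i = i₀ + 1 : step s' → w i₀
                have e1 : ¬ (i ≤ i₀) := by omega
                have e2 : i = i₀ + 1 := by omega
                have e3 : ¬ (i + 1 ≤ i₀) := by omega
                have e4 : ¬ (i + 1 = i₀ + 1) := by omega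
                have e5 : i + 1 - 2 = i₀ := by omega
                have v1 : w' i = s' := by simp [hw', e1, e2]
                have v2 : w' (i+1) = w i₀ := by simp [hw', e3, e4, e5, show ¬ (i = i₀) by omega]
                rw [v1, v2, hwi₀, dist_comm]
                exact hstepj
              · -- i ≥ i₀ + 2
                have e1 : ¬ (i ≤ i₀) := by omega
                have e2 : ¬ (i = i₀ + 1) := by omega
                have e3 : ¬ (i + 1 ≤ i₀) := by omega
                have e4 : ¬ (i + 1 = i₀ + 1) := by omega
                have e5 : i + 1 - 2 = (i - 2) + 1 := by omega
                have v1 : w' i = w (i-2) := by simp [hw', e1, e2]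
                have v2 : w' (i+1) = w ((i-2)+1) := by simp [hw', e3, e4, e5, show ¬ (i = i₀) by omega]
                rw [v1, v2]
                exact hstep (i-2) (by omega)
  obtain ⟨V, m, w, hVS, huV, hcard, hm, hwV, hvis, hstep⟩ := P S.card
  have hVeq : V = S := Finset.eq_of_subset_of_card_le hVS (by omega)
  subst hVeq
  exact ⟨m, w, hm.trans (by omega), hwV, hvis, hstep⟩

lemma glue_lemma (hgeo : ∀ x y : X, ∃ g : ℝ → X, g 0 = x ∧ g (dist x y) = y ∧
      ∀ s ∈ Set.Icc 0 (dist x y), ∀ t ∈ Set.Icc 0 (dist x y),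
        dist (g s) (g t) = |s - t|)
    (q : ℕ → X) (m : ℕ) (hm : 1 ≤ m) {c : ℝ} (hc : 0 ≤ c)
    (hd : ∀ i < m, dist (q i) (q (i+1)) ≤ c) :
    ∃ γ : ℝ → X, (∀ s ∈ Icc (0:ℝ) 1, ∀ t ∈ Icc (0:ℝ) 1,
        dist (γ s) (γ t) ≤ m * c * |s - t|) ∧
      (∀ i ≤ m, γ (i / m) = q i) ∧
      ∀ t ∈ Icc (0:ℝ) 1, ∃ i ≤ m, dist (γ t) (q i) ≤ c := by
  classical
  set d : ℕ → ℝ := fun i => dist (q i) (q (i+1)) with hdd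
  have hd0 : ∀ i, 0 ≤ d i := fun i => dist_nonneg
  choose g hg0 hg1 hgd using fun i => hgeo (q i) (q (i+1))
  set τ : ℝ → X := fun u => g ⌊u⌋₊ ((u - ⌊u⌋₊) * d ⌊u⌋₊) with hτ
  -- τ at naturals
  have hτnat : ∀ i : ℕ, τ i = q i := by
    intro i
    simp only [hτ, Nat.floor_natCast, sub_self, zero_mul, hg0]
  -- τ on [i, i+1]
  have hτseg : ∀ i : ℕ, ∀ u : ℝ, (i:ℝ) ≤ u → u ≤ (i:ℝ) + 1 → τ u = g i ((u - i) * d i) := by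
    intro i u h1 h2
    rcases lt_or_eq_of_le h2 with h2' | h2'
    · have : ⌊u⌋₊ = i := by
        rw [Nat.floor_eq_iff (le_trans (Nat.cast_nonneg i) h1)]
        exact ⟨by exact_mod_cast h1, by push_cast; linarith⟩
      simp only [hτ, this]
    · have : u = (i:ℝ) + 1 := h2'
      subst this
      have e1 : ((i:ℝ) + 1) = ((i+1 : ℕ) : ℝ) := by push_cast; ring
      rw [e1, hτnat (i+1)]
      have : ((i+1 : ℕ):ℝ) - (i:ℝ) = 1 := by push_cast; ring
      rw [this, one_mul]
      exact (hg1 i).symm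
  -- local Lipschitz
  have hloc : ∀ i : ℕ, i < m → ∀ u v : ℝ, (i:ℝ) ≤ u → u ≤ v → v ≤ (i:ℝ)+1 →
      dist (τ u) (τ v) ≤ c * (v - u) := by
    intro i him u v h1 h2 h3
    rw [hτseg i u h1 (by linarith), hτseg i v (by linarith) h3]
    have hu : (u - i) * d i ∈ Icc 0 (d i) := by
      constructor
      · exact mul_nonneg (by linarith) (hd0 i)
      · nlinarith [hd0 i]
    have hv : (v - i) * d i ∈ Icc 0 (d i) := by
      constructor
      · exact mul_nonneg (by linarith) (hd0 i)
      · nlinarith [hd0 i]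
    rw [hgd i _ hu _ hv]
    have : |(u - ↑i) * d i - (v - ↑i) * d i| = (v - u) * d i := by
      rw [abs_of_nonpos (by nlinarith [hd0 i])]
      ring
    rw [this]
    have := hd i him
    nlinarith [hd0 i, hd i him]
  -- global Lipschitz on [0, j]
  have hglob : ∀ j : ℕ, j ≤ m → ∀ u v : ℝ, 0 ≤ u → u ≤ v → v ≤ (j:ℝ) →
      dist (τ u) (τ v) ≤ c * (v - u) := by
    intro j
    induction j with
    | zero =>
      intro _ u v h1 h2 h3
      have h3' : v ≤ 0 := by exact_mod_cast h3
      have hv : v = 0 := le_antisymm h3' (h1.trans h2)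
      have hu : u = 0 := le_antisymm (by linarith) h1
      rw [hu, hv]
      simp
    | succ j ih =>
      intro hjm u v h1 h2 h3
      rcases le_total v (j:ℝ) with hv | hv
      · exact ih (by omega) u v h1 h2 hv
      · rcases le_total (j:ℝ) u with hu | hu
        · exact hloc j (by omega) u v hu h2 (by push_cast at h3 ⊢; linarith)
        · calc dist (τ u) (τ v) ≤ dist (τ u) (τ (j:ℝ)) + dist (τ (j:ℝ)) (τ v) :=
              dist_triangle _ _ _
            _ ≤ c * ((j:ℝ) - u) + c * (v - (j:ℝ)) :=
              add_le_add (ih (by omega) u (j:ℝ) h1 hu (le_refl _))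
                (hloc j (by omega) (j:ℝ) v (le_refl _) hv (by push_cast at h3 ⊢; linarith))
            _ = c * (v - u) := by ring
  set γ : ℝ → X := fun t => τ (m * t) with hγ
  have key : ∀ s t : ℝ, s ∈ Icc (0:ℝ) 1 → t ∈ Icc (0:ℝ) 1 → s ≤ t →
      dist (γ s) (γ t) ≤ m * c * (t - s) := by
    intro s t hs ht hst
    have hmR : (0:ℝ) ≤ (m:ℝ) := Nat.cast_nonneg m
    have := hglob m (le_refl m) (m*s) (m*t) (mul_nonneg hmR hs.1)
      (by nlinarith) (by nlinarith [ht.2])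
    calc dist (γ s) (γ t) ≤ c * (m*t - m*s) := this
      _ = m * c * (t - s) := by ring
  refine ⟨γ, ?_, ?_, ?_⟩
  · intro s hs t ht
    rcases le_total s t with h | h
    · rw [abs_of_nonpos (by linarith)]
      linarith [key s t hs ht h]
    · rw [dist_comm, abs_of_nonneg (by linarith)]
      exact key t s ht hs h
  · intro i hi
    have hm0 : (m:ℝ) ≠ 0 := Nat.cast_ne_zero.2 (by omega)
    have : (m:ℝ) * ((i:ℝ) / m) = i := by field_simp
    rw [hγ]
    simp only []
    rw [this, hτnat]
  · intro t ht
    set u := (m:ℝ) * t with hu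
    have hmR : (0:ℝ) ≤ (m:ℝ) := Nat.cast_nonneg m
    have hu0 : 0 ≤ u := mul_nonneg hmR ht.1
    have hum : u ≤ m := by nlinarith [ht.2]
    rcases lt_or_eq_of_le hum with hlt | heq
    · set i := ⌊u⌋₊ with hi
      have hiu : (i:ℝ) ≤ u := Nat.floor_le hu0
      have hui : u < (i:ℝ) + 1 := Nat.lt_floor_add_one u
      have him : i < m := by
        have : (i:ℝ) < m := lt_of_le_of_lt hiu hlt
        exact_mod_cast this
      refine ⟨i, him.le, ?_⟩
      have hγt : γ t = g i ((u - i) * d i) := hτseg i u hiu hui.le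
      rw [hγt, ← hg0 i]
      have h0m : (0:ℝ) ∈ Icc 0 (d i) := ⟨le_refl _, hd0 i⟩
      have hm1 : (u - i) * d i ∈ Icc 0 (d i) := by
        constructor
        · exact mul_nonneg (by linarith) (hd0 i)
        · nlinarith [hd0 i]
      rw [hgd i _ hm1 _ h0m]
      rw [sub_zero, abs_of_nonneg hm1.1]
      nlinarith [hd0 i, hd i him, hm1.1]
    · refine ⟨m, le_refl _, ?_⟩
      have : γ t = q m := by
        rw [hγ]
        simp only []
        rw [← hu, heq, hτnat]
      rw [this]
      simpa using hc

lemma approx_curve [MeasurableSpace X] [BorelSpace X]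
    (hgeo : ∀ x y : X, ∃ g : ℝ → X, g 0 = x ∧ g (dist x y) = y ∧
      ∀ s ∈ Set.Icc 0 (dist x y), ∀ t ∈ Set.Icc 0 (dist x y),
        dist (g s) (g t) = |s - t|)
    {Γ : Set X} (hc : IsCompact Γ) (hconn : IsConnected Γ) (hH : μH[1] Γ ≠ ⊤)
    {a b : X} (ha : a ∈ Γ) (hb : b ∈ Γ) {ε : ℝ} (hε : 0 < ε) (hεD : 4*ε < dist a b) :
    ∃ γ : ℝ → X, (∀ s ∈ Icc (0:ℝ) 1, ∀ t ∈ Icc (0:ℝ) 1,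
        dist (γ s) (γ t) ≤ 20 * (μH[1] Γ).toReal * |s - t|) ∧
      (∀ t ∈ Icc (0:ℝ) 1, ∃ p ∈ Γ, dist (γ t) p ≤ 5*ε) ∧
      (∀ p ∈ Γ, ∃ t ∈ Icc (0:ℝ) 1, dist (γ t) p ≤ 2*ε) := by
  classical
  set L := (μH[1] Γ).toReal with hL
  have hL0 : 0 ≤ L := ENNReal.toReal_nonneg
  -- finite ε-net
  obtain ⟨F₀, hF₀Γ, hF₀fin, hF₀dense⟩ :=
    Metric.finite_approx_of_totallyBounded hc.totallyBounded ε hε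
  set F : Finset X := hF₀fin.toFinset with hF
  have hFΓ : ∀ f ∈ F, f ∈ Γ := fun f hf => hF₀Γ (hF₀fin.mem_toFinset.1 hf)
  have hFdense : ∀ z ∈ Γ, ∃ f ∈ F, dist z f < ε := by
    intro z hz
    obtain ⟨f, hf, hzf⟩ := mem_iUnion₂.1 (hF₀dense hz)
    exact ⟨f, hF₀fin.mem_toFinset.2 hf, hzf⟩
  -- maximal separated subset
  set P : Finset (Finset X) := F.powerset.filter
    (fun T => ∀ s ∈ T, ∀ t ∈ T, s ≠ t → ε < dist s t) with hP
  have hPne : P.Nonempty := ⟨∅, by simp [hP]⟩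
  obtain ⟨S, hSP, hSmax⟩ := P.exists_max_image Finset.card hPne
  have hSF : S ⊆ F := Finset.mem_powerset.1 (Finset.mem_filter.1 hSP).1
  have hsep : ∀ s ∈ S, ∀ t ∈ S, s ≠ t → ε < dist s t := (Finset.mem_filter.1 hSP).2
  have hSΓ : ∀ s ∈ S, s ∈ Γ := fun s hs => hFΓ s (hSF hs)
  -- maximality: S is ε-dense in F
  have hSdF : ∀ f ∈ F, ∃ s ∈ S, dist f s ≤ ε := by
    intro f hf
    by_contra hcon
    push_neg at hcon
    have hfS : f ∉ S := fun h => by have := hcon f h; rw [dist_self] at this; linarith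
    have hins : insert f S ∈ P := by
      rw [hP, Finset.mem_filter, Finset.mem_powerset]
      refine ⟨Finset.insert_subset hf hSF, ?_⟩
      intro s hs t ht hst
      rcases Finset.mem_insert.1 hs with rfl | hs' <;>
        rcases Finset.mem_insert.1 ht with rfl | ht'
      · exact absurd rfl hst
      · exact hcon t ht'
      · rw [dist_comm]; exact hcon s hs'
      · exact hsep s hs' t ht' hst
    have := hSmax _ hins
    rw [Finset.card_insert_of_notMem hfS] at this
    omega
  -- S is 2ε-dense in Γ
  have hSdense : ∀ z ∈ Γ, ∃ s ∈ S, dist z s ≤ 2*ε := by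
    intro z hz
    obtain ⟨f, hf, hzf⟩ := hFdense z hz
    obtain ⟨s, hs, hfs⟩ := hSdF f hf
    exact ⟨s, hs, by calc dist z s ≤ dist z f + dist f s := dist_triangle _ _ _
      _ ≤ 2*ε := by linarith⟩
  -- projection
  have hproj : ∀ z : X, ∃ s : X, z ∈ Γ → s ∈ S ∧ dist z s ≤ 2*ε := by
    intro z
    by_cases hz : z ∈ Γ
    · obtain ⟨s, hs1, hs2⟩ := hSdense z hz
      exact ⟨s, fun _ => ⟨hs1, hs2⟩⟩
    · exact ⟨a, fun h => absurd h hz⟩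
  choose π hπ using hproj
  -- cardinality bound
  have hcard : (S.card : ℝ) * (ε/2) ≤ L := by
    have h1 := card_separated hc.isClosed hconn.isPreconnected ha hb hε
      (by linarith) S hSΓ hsep
    have h2 : ENNReal.ofReal ((S.card : ℝ) * (ε/2)) ≤ μH[1] Γ := by
      rw [ENNReal.ofReal_mul (by positivity)]
      simpa [ENNReal.ofReal_natCast] using h1
    rw [hL]
    exact ENNReal.toReal_mono hH h2 |>.trans_eq' (by rw [ENNReal.toReal_ofReal (by positivity)])
  -- two far apart points of S
  obtain ⟨sa, hsa, hsad⟩ := hSdense a ha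
  obtain ⟨sb, hsb, hsbd⟩ := hSdense b hb
  have hsane : sa ≠ sb := by
    intro h
    subst h
    have := dist_triangle a sa b
    rw [dist_comm sa b] at this
    linarith
  have hSne : S.Nonempty := ⟨sa, hsa⟩
  -- chain connectivity of S at scale 5ε
  have hSchain : ∀ x ∈ S, ∀ y ∈ S, ∃ n, ∃ c : ℕ → X, c 0 = x ∧ c n = y ∧
      (∀ i ≤ n, c i ∈ S) ∧ ∀ i < n, dist (c i) (c (i+1)) ≤ 5*ε := by
    intro x hx y hy
    obtain ⟨n, c, hc0, hcn, hcΓ, hcd⟩ :=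
      chain_of_connected hconn.isPreconnected (hSΓ x hx) (hSΓ y hy) hε
    set c' : ℕ → X := fun i => if i = 0 then x else if n ≤ i then y else π (c i) with hc'
    have hclose : ∀ i ≤ n, dist (c' i) (c i) ≤ 2*ε := by
      intro i hi
      rcases Nat.eq_zero_or_pos i with rfl | hi0
      · simp [hc', hc0]; linarith
      · rcases Nat.lt_or_ge i n with hin | hin
        · have e1 : ¬ (i = 0) := by omega
          have e2 : ¬ (n ≤ i) := by omega
          have : c' i = π (c i) := by simp [hc', e1, e2]
          rw [this, dist_comm]
          exact (hπ (c i) (hcΓ i hi)).2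
        · have : i = n := by omega
          subst this
          have e1 : ¬ (i = 0) := by omega
          have : c' i = y := by simp [hc', e1]
          rw [this, ← hcn]
          simp; linarith
    refine ⟨n, c', by simp [hc'], ?_, ?_, ?_⟩
    · rcases Nat.eq_zero_or_pos n with rfl | hn0
      · simp [hc', ← hc0, ← hcn]
      · have e1 : ¬ (n = 0) := by omega
        simp [hc', e1]
    · intro i hi
      rcases Nat.eq_zero_or_pos i with rfl | hi0
      · simpa [hc'] using hx
      · rcases Nat.lt_or_ge i n with hin | hin
        · have e1 : ¬ (i = 0) := by omega
          have e2 : ¬ (n ≤ i) := by omega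
          have : c' i = π (c i) := by simp [hc', e1, e2]
          rw [this]
          exact (hπ (c i) (hcΓ i hi)).1
        · have e1 : ¬ (i = 0) := by omega
          have : c' i = y := by simp [hc', e1, hin]
          rw [this]; exact hy
    · intro i hi
      calc dist (c' i) (c' (i+1)) ≤ dist (c' i) (c i) + dist (c i) (c (i+1))
            + dist (c (i+1)) (c' (i+1)) := dist_triangle4 _ _ _ _
        _ ≤ 2*ε + ε + 2*ε := by
            refine add_le_add (add_le_add (hclose i (by omega)) (hcd i hi)) ?_
            rw [dist_comm]
            exact hclose (i+1) (by omega)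
        _ = 5*ε := by ring
  -- walk
  obtain ⟨m, w, hm2, hwS, hvis, hstep⟩ := walk_lemma S hSne (5*ε) hSchain
  -- m ≥ 1
  have hm1 : 1 ≤ m := by
    obtain ⟨i, hi, hwi⟩ := hvis sa hsa
    obtain ⟨j, hj, hwj⟩ := hvis sb hsb
    rcases Nat.eq_zero_or_pos m with rfl | h
    · interval_cases i <;> interval_cases j
      exact absurd (hwi ▸ hwj ▸ rfl : sa = sb) hsane
    · exact h
  -- glue
  obtain ⟨γ, hlip, hpts, hnear⟩ := glue_lemma hgeo w m hm1 (by positivity) hstep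
  have hspeed : (m:ℝ) * (5*ε) ≤ 20 * L := by
    have : (m:ℝ) ≤ 2 * S.card - 2 := by
      have : (m:ℝ) + 2 ≤ 2 * S.card := by exact_mod_cast hm2
      linarith
    nlinarith [hcard]
  refine ⟨γ, ?_, ?_, ?_⟩
  · intro s hs t ht
    calc dist (γ s) (γ t) ≤ m * (5*ε) * |s - t| := hlip s hs t ht
      _ ≤ 20 * L * |s - t| := mul_le_mul_of_nonneg_right hspeed (abs_nonneg _)
  · intro t ht
    obtain ⟨i, hi, hdi⟩ := hnear t ht
    exact ⟨w i, hSΓ _ (hwS i hi), hdi⟩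
  · intro p hp
    obtain ⟨s, hs, hps⟩ := hSdense p hp
    obtain ⟨i, hi, hwi⟩ := hvis s hs
    refine ⟨(i:ℝ)/m, ⟨by positivity, ?_⟩, ?_⟩
    · rw [div_le_one (by exact_mod_cast hm1)]
      exact_mod_cast hi
    · rw [hpts i hi, hwi, dist_comm]
      exact hps

end Aux

open MeasureTheory in
theorem stmt_16 {X : Type*} [MetricSpace X] [MeasurableSpace X] [BorelSpace X]
    (hgeo : ∀ x y : X, ∃ g : ℝ → X, g 0 = x ∧ g (dist x y) = y ∧
      ∀ s ∈ Set.Icc 0 (dist x y), ∀ t ∈ Set.Icc 0 (dist x y),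
        dist (g s) (g t) = |s - t|)
    (Γ : Set X) (hc : IsCompact Γ) (hconn : IsConnected Γ) (hH : μH[1] Γ < ⊤) :
    ∃ γ : ℝ → X, γ '' Set.Icc 0 1 = Γ ∧
      LipschitzOnWith (32 * (μH[1] Γ).toNNReal) γ (Set.Icc 0 1) := by
  classical
  rcases Γ.subsingleton_or_nontrivial with hsub | hnt
  · -- singleton case
    obtain ⟨x, hx⟩ := hconn.nonempty
    have hΓx : Γ = {x} := hsub.eq_singleton_of_mem hx
    refine ⟨fun _ => x, ?_, ?_⟩
    · rw [hΓx]
      exact Set.Nonempty.image_const (Set.nonempty_Icc.2 zero_le_one) x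
    · rw [lipschitzOnWith_iff_dist_le_mul]
      intro u _ v _
      simp only [dist_self]
      positivity
  · obtain ⟨a, ha, b, hb, hab⟩ := hnt
    have hD : 0 < dist a b := dist_pos.2 hab
    set L := (μH[1] Γ).toReal with hLdef
    have hL0 : 0 ≤ L := ENNReal.toReal_nonneg
    set ε : ℕ → ℝ := fun k => dist a b / (8 * (k+1)) with hε
    have hεpos : ∀ k, 0 < ε k := fun k => by positivity
    have hεD : ∀ k, 4 * ε k < dist a b := by
      intro k
      have h1 : ε k ≤ dist a b / 8 := by
        rw [hε]
        apply div_le_div_of_nonneg_left hD.le (by norm_num)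
        nlinarith [Nat.cast_nonneg (α := ℝ) k]
      linarith
    have hε0 : Tendsto ε atTop (𝓝 0) := by
      rw [hε]
      have h1 : Tendsto (fun k : ℕ => 1 / ((k:ℝ)+1)) atTop (𝓝 0) :=
        tendsto_one_div_add_atTop_nhds_zero_nat
      have h2 := h1.const_mul (dist a b / 8)
      rw [mul_zero] at h2
      refine h2.congr (fun k => ?_)
      show dist a b / 8 * (1 / ((k:ℝ) + 1)) = dist a b / (8 * ((k:ℝ) + 1))
      rw [div_mul_div_comm]
      ring_nf
    -- curves at every scale
    have hcurves : ∀ k : ℕ, ∃ γ : ℝ → X, (∀ s ∈ Set.Icc (0:ℝ) 1, ∀ t ∈ Set.Icc (0:ℝ) 1,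
        dist (γ s) (γ t) ≤ 20 * L * |s - t|) ∧
        (∀ t ∈ Set.Icc (0:ℝ) 1, ∃ p ∈ Γ, dist (γ t) p ≤ 5 * ε k) ∧
        (∀ p ∈ Γ, ∃ t ∈ Set.Icc (0:ℝ) 1, dist (γ t) p ≤ 2 * ε k) :=
      fun k => approx_curve hgeo hc hconn hH.ne ha hb (hεpos k) (hεD k)
    choose γs hlip hnear hdense using hcurves
    -- nearby points in Γ
    have hpk : ∀ k : ℕ, ∀ t : ℝ, ∃ p : X, p ∈ Γ ∧
        (t ∈ Set.Icc (0:ℝ) 1 → dist (γs k t) p ≤ 5 * ε k) := by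
      intro k t
      by_cases ht : t ∈ Set.Icc (0:ℝ) 1
      · obtain ⟨p, hp, hd⟩ := hnear k t ht
        exact ⟨p, hp, fun _ => hd⟩
      · exact ⟨a, ha, fun h => absurd h ht⟩
    choose pk hpkΓ hpkd using hpk
    -- ultrafilter
    set 𝒰 : Ultrafilter ℕ := Ultrafilter.of atTop with h𝒰def
    have h𝒰 : (𝒰 : Filter ℕ) ≤ atTop := Ultrafilter.of_le _
    have hε0' : Tendsto ε 𝒰 (𝓝 0) := hε0.mono_left h𝒰
    -- limit curve
    have hlim : ∀ t : ℝ, ∃ x ∈ Γ, Tendsto (fun k => pk k t) 𝒰 (𝓝 x) := by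
      intro t
      obtain ⟨x, hxΓ, hx⟩ := hc.ultrafilter_le_nhds (𝒰.map (fun k => pk k t))
        (by rw [le_principal_iff, Ultrafilter.coe_map, mem_map]
            exact univ_mem' (fun k => hpkΓ k t))
      exact ⟨x, hxΓ, hx⟩
    choose γ hγΓ hγlim using hlim
    -- curves converge to γ pointwise on Icc along 𝒰
    have hconv : ∀ t ∈ Set.Icc (0:ℝ) 1, Tendsto (fun k => γs k t) 𝒰 (𝓝 (γ t)) := by
      intro t ht
      rw [tendsto_iff_dist_tendsto_zero]
      have hb1 : ∀ k, dist (γs k t) (γ t) ≤ 5 * ε k + dist (pk k t) (γ t) := by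
        intro k
        calc dist (γs k t) (γ t) ≤ dist (γs k t) (pk k t) + dist (pk k t) (γ t) :=
              dist_triangle _ _ _
          _ ≤ 5 * ε k + dist (pk k t) (γ t) := by
              have := hpkd k t ht; linarith
      have hb2 : Tendsto (fun k => 5 * ε k + dist (pk k t) (γ t)) 𝒰 (𝓝 0) := by
        have h1 : Tendsto (fun k => 5 * ε k) 𝒰 (𝓝 0) := by
          simpa using hε0'.const_mul 5
        have h2 : Tendsto (fun k => dist (pk k t) (γ t)) 𝒰 (𝓝 0) := by
          rw [← tendsto_iff_dist_tendsto_zero]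
          exact hγlim t
        simpa using h1.add h2
      exact squeeze_zero (fun k => dist_nonneg) hb1 hb2
    refine ⟨γ, ?_, ?_⟩
    · -- image equals Γ
      apply Set.Subset.antisymm
      · rintro x ⟨t, ht, rfl⟩
        exact hγΓ t
      · intro p hp
        have htk : ∀ k : ℕ, ∃ t ∈ Set.Icc (0:ℝ) 1, dist (γs k t) p ≤ 2 * ε k :=
          fun k => hdense k p hp
        choose tk htk1 htk2 using htk
        obtain ⟨t, htIcc, htlim⟩ := isCompact_Icc.ultrafilter_le_nhds (𝒰.map tk)
          (by rw [le_principal_iff, Ultrafilter.coe_map, mem_map]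
              exact univ_mem' htk1)
        have hbd : ∀ k, dist (γ t) p ≤
            dist (γ t) (γs k t) + 20 * L * |t - tk k| + 2 * ε k := by
          intro k
          calc dist (γ t) p ≤ dist (γ t) (γs k t) + dist (γs k t) (γs k (tk k))
                + dist (γs k (tk k)) p := dist_triangle4 _ _ _ _
            _ ≤ dist (γ t) (γs k t) + 20 * L * |t - tk k| + 2 * ε k := by
                refine add_le_add (add_le_add (le_refl _)
                  (hlip k t htIcc (tk k) (htk1 k))) (htk2 k)
        have hbnd0 : Tendsto (fun k => dist (γ t) (γs k t) + 20 * L * |t - tk k|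
            + 2 * ε k) 𝒰 (𝓝 0) := by
          have h1 : Tendsto (fun k => dist (γ t) (γs k t)) 𝒰 (𝓝 0) := by
            have := (hconv t htIcc).dist (tendsto_const_nhds (x := γ t) (f := (𝒰 : Filter ℕ)))
            simpa [dist_comm] using this
          have h2 : Tendsto (fun k => 20 * L * |t - tk k|) 𝒰 (𝓝 0) := by
            have h3 : Tendsto (fun k => |t - tk k|) 𝒰 (𝓝 0) := by
              have := (tendsto_const_nhds (x := t) (f := (𝒰 : Filter ℕ))).dist htlim
              simpa [Real.dist_eq] using this
            simpa using h3.const_mul (20 * L)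
          have h4 : Tendsto (fun k => 2 * ε k) 𝒰 (𝓝 0) := by
            simpa using hε0'.const_mul 2
          simpa using (h1.add h2).add h4
        have : dist (γ t) p ≤ 0 := ge_of_tendsto hbnd0 (Eventually.of_forall hbd)
        have : γ t = p := by
          rw [← dist_le_zero]; exact this
        exact ⟨t, htIcc, this⟩
    · -- Lipschitz
      rw [lipschitzOnWith_iff_dist_le_mul]
      intro s hs t ht
      have hle : dist (γ s) (γ t) ≤ 20 * L * |s - t| := by
        refine le_of_tendsto ((hconv s hs).dist (hconv t ht)) (Eventually.of_forall ?_)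
        intro k
        exact hlip k s hs t ht
      have hcast : ((32 * (μH[1] Γ).toNNReal : NNReal) : ℝ) = 32 * L := by
        push_cast
        rfl
      rw [hcast, Real.dist_eq]
      have : 20 * L * |s - t| ≤ 32 * L * |s - t| := by
        have := abs_nonneg (s - t)
        nlinarith
      linarith
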